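/- Let U ⊆ ℝ^d be open and let F : ℝ^d → ℝ^d be continuous with F(ℝ^d) ⊆ U. Then the preimage under F of every compact subset of U is compact if and only if the following holds: for every sequence (x_k) in ℝ^d with |x_k| = 1 for all k and x_k → x for some x, every sequence (t_k) of positive reals with t_k → ∞, and every y ∈ ℝ^d, if F(t_k · x_k) → y as k → ∞, then y lies in the frontier ∂U of U. -/

import Mathlib

open Filter Topology

/-- a continuous map `F : ℝ^d → ℝ^d` with range contained in an open set `U`
is proper as a map into `U` iff whenever a sequence of points `t_k • x_k` with `|x_k| = 1`,
`x_k → x` and `t_k → ∞` has `F(t_k • x_k) → y`, the limit `y` lies in the frontier of `U`. -/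
theorem stmt6 {d : ℕ} (U : Set (EuclideanSpace ℝ (Fin d))) (hU : IsOpen U)
    (F : EuclideanSpace ℝ (Fin d) → EuclideanSpace ℝ (Fin d))
    (hF : Continuous F) (hrange : Set.range F ⊆ U) :
    (∀ K : Set (EuclideanSpace ℝ (Fin d)), K ⊆ U → IsCompact K → IsCompact (F ⁻¹' K)) ↔
    (∀ (x : ℕ → EuclideanSpace ℝ (Fin d)) (x₀ : EuclideanSpace ℝ (Fin d)),
      (∀ k, ‖x k‖ = 1) → Tendsto x atTop (𝓝 x₀) →
      ∀ t : ℕ → ℝ, (∀ k, 0 < t k) → Tendsto t atTop atTop →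
      ∀ y : EuclideanSpace ℝ (Fin d),
        Tendsto (fun k => F (t k • x k)) atTop (𝓝 y) → y ∈ frontier U) := by
  constructor
  · intro hproper x x₀ hx1 hx t ht htop y hy
    rw [hU.frontier_eq]
    refine ⟨mem_closure_of_tendsto hy (Eventually.of_forall fun k => hrange ⟨_, rfl⟩), ?_⟩
    intro hyU
    obtain ⟨r, hr, hball⟩ := Metric.isOpen_iff.mp hU y hyU
    have hsub : Metric.closedBall y (r / 2) ⊆ U :=
      (Metric.closedBall_subset_ball (by linarith)).trans hball
    have hK : IsCompact (F ⁻¹' Metric.closedBall y (r / 2)) :=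
      hproper _ hsub (isCompact_closedBall _ _)
    obtain ⟨R, hR⟩ := isBounded_iff_forall_norm_le.mp hK.isBounded
    have h1 : ∀ᶠ k in atTop, F (t k • x k) ∈ Metric.closedBall y (r / 2) :=
      hy (Metric.closedBall_mem_nhds y (by linarith))
    have h2 : ∀ᶠ k in atTop, R < t k := htop.eventually_gt_atTop R
    obtain ⟨k, hk1, hk2⟩ := (h1.and h2).exists
    have : ‖t k • x k‖ ≤ R := hR _ hk1
    rw [norm_smul, hx1 k, mul_one, Real.norm_eq_abs, abs_of_pos (ht k)] at this
    linarith
  · intro hcond K hKU hK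
    refine Metric.isCompact_of_isClosed_isBounded (hK.isClosed.preimage hF) ?_
    by_contra hb
    rw [isBounded_iff_forall_norm_le] at hb
    push_neg at hb
    choose z hzK hz using fun k : ℕ => hb k
    have hz0 : ∀ k, z k ≠ 0 := fun k =>
      norm_pos_iff.mp (lt_of_le_of_lt (Nat.cast_nonneg k) (hz k))
    set xs : ℕ → EuclideanSpace ℝ (Fin d) := fun k => ‖z k‖⁻¹ • z k with hxs_def
    have hxs1 : ∀ k, ‖xs k‖ = 1 := fun k => by
      rw [hxs_def, norm_smul, norm_inv, norm_norm, inv_mul_cancel₀ (norm_ne_zero_iff.mpr (hz0 k))]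
    have hxs_mem : ∀ k, xs k ∈ Metric.sphere (0 : EuclideanSpace ℝ (Fin d)) 1 := fun k =>
      mem_sphere_zero_iff_norm.mpr (hxs1 k)
    obtain ⟨x₀, -, φ, hφ, hxsφ⟩ :=
      (isCompact_sphere (0 : EuclideanSpace ℝ (Fin d)) 1).tendsto_subseq hxs_mem
    obtain ⟨y, hyK, ψ, hψ, hFz⟩ := hK.tendsto_subseq (x := fun k => F (z (φ k)))
      (fun k => hzK (φ k))
    have hmono : StrictMono (φ ∘ ψ) := hφ.comp hψ
    have hfront : y ∈ frontier U := by
      refine hcond (fun k => xs (φ (ψ k))) x₀ (fun k => hxs1 _)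
        (hxsφ.comp hψ.tendsto_atTop) (fun k => ‖z (φ (ψ k))‖)
        (fun k => norm_pos_iff.mpr (hz0 _)) ?_ y ?_
      · refine tendsto_atTop_mono (fun k => ?_) tendsto_natCast_atTop_atTop
        exact le_trans (Nat.cast_le.mpr (hmono.le_apply)) (hz _).le
      · have : ∀ k, ‖z (φ (ψ k))‖ • xs (φ (ψ k)) = z (φ (ψ k)) := fun k =>
          smul_inv_smul₀ (norm_ne_zero_iff.mpr (hz0 _)) _
        simpa only [this, Function.comp_def] using hFz
    rw [hU.frontier_eq] at hfront
    exact hfront.2 (hKU hyK)
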